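/- For odd prime power q, the number N_2n(q) of self-reciprocal irreducible monic polynomials of degree 2n over F_q satisfies N_2n(q) = (1/(2n)) ∑_{d | n, d odd} μ(d) (q^{n/d} - 1). -/

import Mathlib

open Polynomial IntermediateField

attribute [local instance] Classical.propDecidable

namespace SRAux

variable {F : Type*} [Field F] [Fintype F]

local notation "AC" => AlgebraicClosure F

lemma exists_frobAlgHom (i : ℕ) :
    ∃ f : AC →ₐ[F] AC, ∀ x, f x = x ^ (Fintype.card F) ^ i := by
  set p := ringChar F with hp
  haveI : CharP F p := ringChar.charP F
  obtain ⟨k, hpp, hcard⟩ := FiniteField.card F p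
  haveI : CharP AC p := charP_of_injective_algebraMap (algebraMap F AC).injective p
  haveI : Fact p.Prime := ⟨hpp⟩
  refine ⟨AlgHom.mk (iterateFrobenius AC p (k * i)) ?_, ?_⟩
  · intro a
    show (iterateFrobenius AC p (k * i)) ((algebraMap F AC) a) = (algebraMap F AC) a
    rw [iterateFrobenius_def, pow_mul, ← hcard, ← map_pow, FiniteField.pow_card_pow]
  · intro x
    show (iterateFrobenius AC p (k * i)) x = x ^ Fintype.card F ^ i
    rw [iterateFrobenius_def, pow_mul, ← hcard]

lemma fix_pow_mul {α : AC} {a : ℕ} (h : α ^ (Fintype.card F) ^ a = α) (t : ℕ) :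
    α ^ (Fintype.card F) ^ (a * t) = α := by
  induction t with
  | zero => simp
  | succ t ih => rw [Nat.mul_succ, pow_add, pow_mul, ih, h]

lemma pow_card_pow_minpoly (α : AC) :
    α ^ (Fintype.card F) ^ (minpoly F α).natDegree = α := by
  have hint : IsIntegral F α := Algebra.IsIntegral.isIntegral α
  haveI := IntermediateField.adjoin.finiteDimensional hint
  haveI : Fintype (F⟮α⟯ : IntermediateField F AC) :=
    Module.fintypeOfFintype (IsNoetherian.finsetBasis F (F⟮α⟯ : IntermediateField F AC))
  have hcard : Fintype.card (F⟮α⟯ : IntermediateField F AC)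
      = Fintype.card F ^ (minpoly F α).natDegree := by
    rw [Module.card_eq_pow_finrank (K := F), IntermediateField.adjoin.finrank hint]
  have := FiniteField.pow_card (AdjoinSimple.gen F α)
  rw [hcard] at this
  have := congrArg (algebraMap (F⟮α⟯ : IntermediateField F AC) AC) this
  rwa [map_pow, IntermediateField.AdjoinSimple.algebraMap_gen] at this

lemma exists_bezout {j m : ℕ} (hj : 0 < j) (hm : 0 < m) :
    ∃ a b : ℕ, a * j = Nat.gcd j m + b * m := by
  have h := Nat.gcd_eq_gcd_ab j m
  set x := Nat.gcdA j m
  set y := Nat.gcdB j m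
  set t : ℤ := x.natAbs + y.natAbs + 1 with ht
  have hxa : (x.natAbs : ℤ) ≥ -x := by omega
  have hya : (y.natAbs : ℤ) ≥ y := by omega
  have hna : (0:ℤ) ≤ (x.natAbs : ℤ) := Int.natCast_nonneg _
  have hnb : (0:ℤ) ≤ (y.natAbs : ℤ) := Int.natCast_nonneg _
  have hm' : (1:ℤ) ≤ m := by exact_mod_cast hm
  have hj' : (1:ℤ) ≤ j := by exact_mod_cast hj
  have hxt : 0 ≤ x + t * m := by nlinarith [ht]
  have hyt : 0 ≤ t * j - y := by nlinarith [ht]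
  refine ⟨(x + t * m).toNat, (t * j - y).toNat, ?_⟩
  have : ((x + t * m).toNat : ℤ) * j = Nat.gcd j m + ((t * j - y).toNat : ℤ) * m := by
    rw [Int.toNat_of_nonneg hxt, Int.toNat_of_nonneg hyt, h]; ring
  exact_mod_cast this

lemma minpoly_natDegree_dvd_iff (α : AC) (j : ℕ) :
    α ^ (Fintype.card F) ^ j = α ↔ (minpoly F α).natDegree ∣ j := by
  have hint : IsIntegral F α := Algebra.IsIntegral.isIntegral α
  set q := Fintype.card F with hq
  have hq1 : 1 < q := Fintype.one_lt_card
  set m := (minpoly F α).natDegree with hm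
  have hm0 : 0 < m := minpoly.natDegree_pos hint
  constructor
  · intro hfix
    rcases Nat.eq_zero_or_pos j with rfl | hj
    · exact dvd_zero m
    set g := Nat.gcd j m with hg
    have hg0 : 0 < g := Nat.gcd_pos_of_pos_left m hj
    -- α is fixed by frobenius^g
    obtain ⟨a, b, hab⟩ := exists_bezout hj hm0
    have hfixg : α ^ q ^ g = α := by
      have h1 : α ^ q ^ (j * a) = α := fix_pow_mul hfix a
      have h2 : α ^ q ^ (m * b) = α := fix_pow_mul (pow_card_pow_minpoly α) b
      calc α ^ q ^ g = (α ^ q ^ (m * b)) ^ q ^ g := by rw [h2]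
        _ = α ^ q ^ (j * a) := by
            rw [← pow_mul, ← pow_add]
            congr 1
            rw [mul_comm j a, hab, mul_comm b m]
            ring
        _ = α := h1
    -- the whole field F⟮α⟯ is fixed by frobenius^g
    obtain ⟨f, hf⟩ := exists_frobAlgHom (F := F) g
    have hsub : Algebra.adjoin F {α} ≤ AlgHom.equalizer f (AlgHom.id F AC) := by
      apply Algebra.adjoin_le
      intro x hx
      rcases hx with rfl
      show f x = x
      rw [hf, hfixg]
    haveI := IntermediateField.adjoin.finiteDimensional hint
    haveI : Fintype (F⟮α⟯ : IntermediateField F AC) :=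
      Module.fintypeOfFintype (IsNoetherian.finsetBasis F (F⟮α⟯ : IntermediateField F AC))
    -- the set of fixed points injects into roots of X^(q^g) - X
    set P : AC[X] := X ^ q ^ g - X with hP
    have hdegP : P.natDegree = q ^ g := by
      rw [hP, natDegree_sub_eq_left_of_natDegree_lt, natDegree_X_pow]
      rw [natDegree_X_pow, natDegree_X]
      exact lt_of_lt_of_le hq1 (Nat.le_self_pow hg0.ne' q)
    have hPne : P ≠ 0 := by
      intro h0
      rw [h0, natDegree_zero] at hdegP
      have : 0 < q ^ g := pow_pos (by omega) g
      omega
    have hsubset : ((F⟮α⟯ : IntermediateField F AC) : Set AC) ⊆ ↑P.roots.toFinset := by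
      intro x hx
      have hx' : x ∈ Algebra.adjoin F {α} := by
        rw [← IntermediateField.adjoin_simple_toSubalgebra_of_isAlgebraic hint.isAlgebraic]
        exact hx
      have := hsub hx'
      rw [AlgHom.mem_equalizer] at this
      rw [hf] at this
      simp only [AlgHom.coe_id, id_eq] at this
      simp only [Multiset.mem_toFinset, Finset.coe_insert, Set.mem_setOf_eq,
        Multiset.mem_coe, mem_roots, hPne, ne_eq, not_false_eq_true, true_and,
        Finset.mem_coe]
      rw [IsRoot.def, hP]
      simp [hq, this]
    -- cardinalities
    have hcardE : Set.ncard ((F⟮α⟯ : IntermediateField F AC) : Set AC) = q ^ m := by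
      rw [← Nat.card_coe_set_eq]
      have : Nat.card (F⟮α⟯ : IntermediateField F AC)
          = Fintype.card (F⟮α⟯ : IntermediateField F AC) := Nat.card_eq_fintype_card
      rw [SetLike.coe_sort_coe, this, Module.card_eq_pow_finrank (K := F),
        IntermediateField.adjoin.finrank hint]
    have hle : q ^ m ≤ q ^ g := by
      rw [← hcardE]
      calc Set.ncard ((F⟮α⟯ : IntermediateField F AC) : Set AC)
          ≤ Set.ncard (↑P.roots.toFinset : Set AC) :=
            Set.ncard_le_ncard hsubset (Set.finite_coe_iff.mp (by infer_instance))
        _ = P.roots.toFinset.card := Set.ncard_coe_finset _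
        _ ≤ Multiset.card P.roots := P.roots.toFinset_card_le
        _ ≤ P.natDegree := P.card_roots'
        _ = q ^ g := hdegP
    have hmg : m ≤ g := (Nat.pow_le_pow_iff_right hq1).mp hle
    have : g = m := le_antisymm (Nat.le_of_dvd hm0 (Nat.gcd_dvd_right j m)) hmg
    exact this ▸ Nat.gcd_dvd_left j m
  · rintro ⟨t, rfl⟩
    exact fix_pow_mul (pow_card_pow_minpoly α) t

lemma two_ne_zero_of_odd_card (hodd : Odd (Fintype.card F)) : (2 : F) ≠ 0 := by
  set p := ringChar F with hp
  haveI : CharP F p := ringChar.charP F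
  obtain ⟨k, hpp, hcard⟩ := FiniteField.card F p
  intro h2
  have hdvd : p ∣ 2 := (CharP.cast_eq_zero_iff F p 2).mp (by exact_mod_cast h2)
  have hp2 : p = 2 := (Nat.prime_dvd_prime_iff_eq hpp Nat.prime_two).mp hdvd
  rw [hcard, hp2] at hodd
  have : Even ((2:ℕ) ^ (k:ℕ)) := Nat.even_pow.mpr ⟨even_two, k.ne_zero⟩
  exact (Nat.not_even_iff_odd.mpr hodd) this

lemma neg_one_ne_one_AC (hodd : Odd (Fintype.card F)) : (-1 : AC) ≠ 1 := by
  intro h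
  have h2 : (2 : AC) = 0 := by linear_combination -h
  have : (algebraMap F AC) 2 = 0 := by rw [map_ofNat]; exact_mod_cast h2
  exact two_ne_zero_of_odd_card hodd ((algebraMap F AC).injective (by simpa using this))

lemma dvd_structure {m n : ℕ} (hn : 0 < n) (h2 : m ∣ 2 * n) (h1 : ¬ m ∣ n) :
    ∃ d, 0 < d ∧ m = 2 * d ∧ d ∣ n ∧ Odd (n / d) := by
  have hm0 : m ≠ 0 := by rintro rfl; rw [zero_dvd_iff] at h2; omega
  have hmeven : 2 ∣ m := by
    by_contra hodd
    have hcop : Nat.Coprime m 2 :=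
      (Nat.Prime.coprime_iff_not_dvd Nat.prime_two).mpr hodd |>.symm
    exact h1 (hcop.dvd_of_dvd_mul_left h2)
  obtain ⟨d, rfl⟩ := hmeven
  have hd0 : 0 < d := by omega
  have hdn : d ∣ n := (mul_dvd_mul_iff_left (two_ne_zero)).mp h2
  refine ⟨d, hd0, rfl, hdn, ?_⟩
  rw [Nat.odd_iff]
  by_contra hev
  have : 2 ∣ n / d := by omega
  obtain ⟨t, ht⟩ := this
  have hn' : n = d * (n / d) := (Nat.mul_div_cancel' hdn).symm
  exact h1 ⟨t, by rw [hn', ht]; ring⟩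

lemma minpoly_selfrec (hodd : Odd (Fintype.card F)) {n : ℕ} (hn : 0 < n) {α : AC}
    (hα : α ^ ((Fintype.card F) ^ n + 1) = 1) (h1 : α ≠ 1) (h2 : α ≠ -1) :
    ∃ d, 0 < d ∧ d ∣ n ∧ Odd (n / d) ∧ (minpoly F α).natDegree = 2 * d ∧
      (minpoly F α).reverse = minpoly F α := by
  set q := Fintype.card F with hqdef
  have hint : IsIntegral F α := Algebra.IsIntegral.isIntegral α
  set p := minpoly F α with hpdef
  set m := p.natDegree with hmdef
  have hα0 : α ≠ 0 := by rintro rfl; rw [zero_pow (by positivity)] at hα; exact zero_ne_one hα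
  have hinv : α ^ q ^ n = α⁻¹ := by
    have : α ^ q ^ n * α = 1 := by rw [← pow_succ]; exact hα
    field_simp at this ⊢
    linear_combination this
  have hfix2n : α ^ q ^ (2 * n) = α := by
    rw [two_mul, pow_add, pow_mul, hinv, inv_pow, hinv, inv_inv]
  have hdvd2n : m ∣ 2 * n := (minpoly_natDegree_dvd_iff α (2 * n)).mp hfix2n
  have hndvd : ¬ m ∣ n := by
    intro hdvd
    have : α ^ q ^ n = α := (minpoly_natDegree_dvd_iff α n).mpr hdvd
    have h' : α = α⁻¹ := by rw [← hinv, this]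
    have hαα : α * α = 1 := by nth_rewrite 2 [h']; exact mul_inv_cancel₀ hα0
    rcases mul_self_eq_one_iff.mp hαα with h | h
    exacts [h1 h, h2 h]
  obtain ⟨d, hd0, hmd, hdn, hodd'⟩ := dvd_structure hn hdvd2n hndvd
  -- α⁻¹ is a root of p
  obtain ⟨f, hf⟩ := exists_frobAlgHom (F := F) n
  have hroot_inv : (aeval α⁻¹) p = 0 := by
    have : (aeval (f α)) p = f ((aeval α) p) := aeval_algHom_apply f α p
    rw [hf, hinv, minpoly.aeval, map_zero] at this
    exact this
  -- hence p divides its own reverse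
  haveI : Invertible α⁻¹ := invertibleOfNonzero (inv_ne_zero hα0)
  have hroot_rev : (aeval α) p.reverse = 0 := by
    have := (eval₂_reverse_eq_zero_iff (algebraMap F AC) α⁻¹ p).mpr
      (by rwa [Polynomial.aeval_def] at hroot_inv)
    rwa [invOf_eq_inv, inv_inv, ← Polynomial.aeval_def] at this
  have hdvdrev : p ∣ p.reverse := minpoly.dvd F α hroot_rev
  have hpne : p ≠ 0 := minpoly.ne_zero hint
  have hmon : p.Monic := minpoly.monic hint
  have hc0 : p.coeff 0 ≠ 0 := minpoly.coeff_zero_ne_zero hint hα0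
  have htr : p.natTrailingDegree = 0 := natTrailingDegree_eq_zero.mpr (Or.inr hc0)
  have hrevdeg : p.reverse.natDegree = m := by rw [reverse_natDegree, htr, Nat.sub_zero]
  obtain ⟨s, hs⟩ := hdvdrev
  have hsne : s ≠ 0 := by
    rintro rfl; rw [mul_zero] at hs; exact hpne (reverse_eq_zero.mp hs)
  have hsdeg : s.natDegree = 0 := by
    have := hrevdeg
    rw [hs, natDegree_mul hpne hsne] at this
    omega
  obtain ⟨a, rfl⟩ : ∃ a, s = C a := ⟨s.coeff 0, Polynomial.eq_C_of_natDegree_eq_zero hsdeg⟩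
  set c := p.coeff 0 with hcdef
  -- coefficient 0 of the equation: 1 = c * a
  have hcoeff0 : (1 : F) = c * a := by
    have := congrArg (fun r => Polynomial.coeff r 0) hs
    simpa [coeff_zero_reverse, Polynomial.mul_coeff_zero, hmon.leadingCoeff] using this
  -- coefficient m of the equation: c = a
  have hcoeffm : c = a := by
    have := congrArg (fun r => Polynomial.coeff r m) hs
    simp only [Polynomial.coeff_mul_C] at this
    rw [Polynomial.coeff_reverse, Polynomial.revAt_le (le_refl m), Nat.sub_self,
      hmon.coeff_natDegree] at this
    simpa using this
  subst hcoeffm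
  refine ⟨d, hd0, hdn, hodd', hmd, ?_⟩
  rcases mul_self_eq_one_iff.mp hcoeff0.symm with hc1 | hcm1
  · rw [hs, hc1, map_one, mul_one]
  · -- c = -1 : contradiction using characteristic ≠ 2
    exfalso
    haveI : Invertible (1 : F) := invertibleOne
    have hev : Polynomial.eval 1 p.reverse = Polynomial.eval 1 p := by
      have h' := Polynomial.eval₂_reverse_mul_pow (RingHom.id F) (1 : F) p
      rw [invOf_one, one_pow, mul_one, Polynomial.eval₂_at_one, Polynomial.eval₂_at_one] at h'
      simpa only [RingHom.id_apply] using h'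
    rw [hs, hcm1, map_neg, map_one, mul_neg, mul_one, Polynomial.eval_neg] at hev
    have hev1 : Polynomial.eval 1 p = 0 := by
      have h2 : (2 : F) * Polynomial.eval 1 p = 0 := by linear_combination -hev
      rcases mul_eq_zero.mp h2 with h | h
      · exact absurd h (two_ne_zero_of_odd_card hodd)
      · exact h
    have hdeg1 : p.degree = 1 :=
      Polynomial.degree_eq_one_of_irreducible_of_root (minpoly.irreducible hint) hev1
    have : m = 1 := Polynomial.natDegree_eq_of_degree_eq_some hdeg1
    exact hndvd (this ▸ one_dvd n)

lemma root_frob_pow_eq_inv (hodd : Odd (Fintype.card F)) {d : ℕ} (hd : 0 < d) {p : F[X]}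
    (hirr : Irreducible p) (hmon : p.Monic) (hdeg : p.natDegree = 2 * d)
    (hrev : p.reverse = p) {β : AC} (hβ : (aeval β) p = 0) :
    β ^ (Fintype.card F) ^ d = β⁻¹ := by
  set q := Fintype.card F with hqdef
  have hmin : p = minpoly F β := minpoly.eq_of_irreducible_of_monic hirr hβ hmon
  have hint : IsIntegral F β := Algebra.IsIntegral.isIntegral β
  have hc0 : p.coeff 0 = 1 := by
    have := coeff_zero_reverse p
    rw [hrev, hmon.leadingCoeff] at this
    exact this
  have hβ0 : β ≠ 0 := by
    rintro rfl
    rw [Polynomial.aeval_def, Polynomial.eval₂_at_zero, hc0, map_one] at hβ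
    exact one_ne_zero hβ
  have hβ1 : β ≠ 1 := by
    rintro rfl
    have : (minpoly F (1 : AC)).natDegree = 1 := by
      rw [← map_one (algebraMap F AC), minpoly.eq_X_sub_C, natDegree_X_sub_C]
    rw [← hmin, hdeg] at this; omega
  have hβm1 : β ≠ -1 := by
    rintro rfl
    have : (minpoly F (-1 : AC)).natDegree = 1 := by
      rw [show (-1 : AC) = algebraMap F AC (-1) by rw [map_neg, map_one],
        minpoly.eq_X_sub_C, natDegree_X_sub_C]
    rw [← hmin, hdeg] at this; omega
  -- β⁻¹ is also a root of p
  haveI : Invertible β := invertibleOfNonzero hβ0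
  have hrootinv : (aeval β⁻¹) p = 0 := by
    have := (eval₂_reverse_eq_zero_iff (algebraMap F AC) β p).mpr
      (by rwa [Polynomial.aeval_def] at hβ)
    rwa [hrev, invOf_eq_inv, ← Polynomial.aeval_def] at this
  -- the embedding sending β to β⁻¹
  haveI := IntermediateField.adjoin.finiteDimensional hint
  haveI : Algebra.IsAlgebraic F (F⟮β⟯ : IntermediateField F AC) :=
    Algebra.IsAlgebraic.of_finite F _
  have hmem : β⁻¹ ∈ (minpoly F β).aroots AC :=
    (Polynomial.mem_aroots).mpr ⟨minpoly.ne_zero hint, by rwa [← hmin]⟩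
  set σ : (F⟮β⟯ : IntermediateField F AC) →ₐ[F] AC :=
    (IntermediateField.algHomAdjoinIntegralEquiv F (K := AC) hint).symm ⟨β⁻¹, hmem⟩ with hσdef
  have hσgen : σ (IntermediateField.AdjoinSimple.gen F β) = β⁻¹ :=
    IntermediateField.algHomAdjoinIntegralEquiv_symm_apply_gen F hint ⟨β⁻¹, hmem⟩
  -- all algebra maps are Frobenius powers
  obtain ⟨Φ, hΦ⟩ : ∃ Φ : ℕ → (AC →ₐ[F] AC), ∀ i x, Φ i x = x ^ q ^ i :=
    ⟨fun i => (exists_frobAlgHom i).choose, fun i => (exists_frobAlgHom i).choose_spec⟩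
  set χ : ℕ → ((F⟮β⟯ : IntermediateField F AC) →ₐ[F] AC) :=
    fun i => (Φ i).comp (IntermediateField.val _) with hχdef
  have hχgen : ∀ i, χ i (IntermediateField.AdjoinSimple.gen F β) = β ^ q ^ i := by
    intro i
    show Φ i ((IntermediateField.AdjoinSimple.gen F β : AC)) = β ^ q ^ i
    rw [IntermediateField.AdjoinSimple.coe_gen, hΦ]
  have hβfix : ∀ j : ℕ, β ^ q ^ j = β ↔ 2 * d ∣ j := by
    intro j
    rw [minpoly_natDegree_dvd_iff β j, ← hmin, hdeg]
  have key : ∀ i j : ℕ, i < 2 * d → j < 2 * d → i ≤ j → χ i = χ j → i = j := by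
    intro i j hi hj hle hij
    have hgen := congrArg (fun f => f (IntermediateField.AdjoinSimple.gen F β)) hij
    simp only [hχgen] at hgen
    have heq : Φ i (β ^ q ^ (j - i)) = Φ i β := by
      rw [hΦ, hΦ, ← pow_mul, ← pow_add]
      rw [Nat.sub_add_cancel hle]
      exact hgen.symm
    have hβeq : β ^ q ^ (j - i) = β := (Φ i).injective heq
    have hdvd' := (hβfix (j - i)).mp hβeq
    rcases Nat.eq_zero_or_pos (j - i) with h0 | hpos
    · omega
    · have := Nat.le_of_dvd hpos hdvd'; omega
  have hinj : Set.InjOn χ (Finset.range (2 * d)) := by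
    intro i hi j hj hij
    simp only [Finset.coe_range, Set.mem_Iio] at hi hj
    rcases le_total i j with h | h
    · exact key i j hi hj h hij
    · exact (key j i hj hi h hij.symm).symm
  have huniv : (Finset.range (2 * d)).image χ = Finset.univ := by
    apply Finset.eq_univ_of_card
    rw [Finset.card_image_of_injOn hinj, Finset.card_range, AlgHom.card,
      IntermediateField.adjoin.finrank hint, ← hmin, hdeg]
  have hσmem : σ ∈ (Finset.range (2 * d)).image χ := huniv ▸ Finset.mem_univ σ
  obtain ⟨i, hi, hχi⟩ := Finset.mem_image.mp hσmem
  rw [Finset.mem_range] at hi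
  have hβi : β ^ q ^ i = β⁻¹ := by
    rw [← hχgen i, hχi, hσgen]
  -- i = d
  have h2i : β ^ q ^ (2 * i) = β := by
    rw [two_mul, pow_add, pow_mul, hβi, inv_pow, hβi, inv_inv]
  have hdvd : 2 * d ∣ 2 * i := (hβfix (2 * i)).mp h2i
  have hi0 : i ≠ 0 := by
    rintro rfl
    rw [pow_zero, pow_one] at hβi
    have hββ : β * β = 1 := by nth_rewrite 2 [hβi]; exact mul_inv_cancel₀ hβ0
    rcases mul_self_eq_one_iff.mp hββ with h | h
    exacts [hβ1 h, hβm1 h]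
  have h1 : 2 * d ≤ 2 * i := Nat.le_of_dvd (by omega) hdvd
  obtain ⟨u, hu⟩ := hdvd
  have hu1 : u = 1 := by
    rcases u with _ | _ | u
    · omega
    · rfl
    · exfalso
      have : 2 * d * 2 ≤ 2 * d * (u + 1 + 1) := Nat.mul_le_mul (le_refl (2 * d)) (by omega)
      omega
  subst hu1
  have : i = d := by omega
  rw [← this]; exact hβi

lemma root_pow_qn (hodd : Odd (Fintype.card F)) {n d : ℕ} (hd : 0 < d) (hdn : d ∣ n)
    (hnd : Odd (n / d)) {p : F[X]} (hirr : Irreducible p) (hmon : p.Monic)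
    (hdeg : p.natDegree = 2 * d) (hrev : p.reverse = p) {β : AC}
    (hβ : (aeval β) p = 0) : β ^ ((Fintype.card F) ^ n + 1) = 1 := by
  set q := Fintype.card F with hqdef
  have hmin : p = minpoly F β := minpoly.eq_of_irreducible_of_monic hirr hβ hmon
  have hβd : β ^ q ^ d = β⁻¹ := root_frob_pow_eq_inv hodd hd hirr hmon hdeg hrev hβ
  have hc0 : p.coeff 0 = 1 := by
    have := coeff_zero_reverse p
    rw [hrev, hmon.leadingCoeff] at this
    exact this
  have hβ0 : β ≠ 0 := by
    rintro rfl
    rw [Polynomial.aeval_def, Polynomial.eval₂_at_zero, hc0, map_one] at hβ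
    exact one_ne_zero hβ
  obtain ⟨t, ht⟩ := hnd
  have hn' : n = d * (n / d) := (Nat.mul_div_cancel' hdn).symm
  have hfix : β ^ q ^ (2 * d * t) = β := by
    apply (minpoly_natDegree_dvd_iff β _).mpr
    rw [← hmin, hdeg]
    exact ⟨t, rfl⟩
  have hqn : q ^ n = q ^ (2 * d * t) * q ^ d := by
    rw [← pow_add]
    congr 1
    rw [hn', ht]; ring
  calc β ^ (q ^ n + 1) = β ^ q ^ n * β := by rw [pow_succ]
    _ = (β ^ q ^ (2 * d * t)) ^ q ^ d * β := by rw [hqn, pow_mul]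
    _ = β⁻¹ * β := by rw [hfix, hβd]
    _ = 1 := inv_mul_cancel₀ hβ0

lemma key_count (hodd : Odd (Fintype.card F)) {m : ℕ} (hm : 0 < m) :
    (Fintype.card F) ^ m + 1
      = 2 + ∑ d ∈ m.divisors.filter (fun d => Odd (m / d)),
          2 * d * ({p : F[X] | Irreducible p ∧ p.Monic ∧ p.natDegree = 2 * d ∧
            p.reverse = p}.ncard) := by
  classical
  set q := Fintype.card F with hqdef
  have hq1 : 1 < q := Fintype.one_lt_card
  set N := q ^ m + 1 with hNdef
  have hN0 : 0 < N := by positivity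
  have hNeven : Even N := by
    have : Odd (q ^ m) := hodd.pow
    rcases this with ⟨t, ht⟩
    exact ⟨t + 1, by omega⟩
  -- N is invertible in AC
  haveI : NeZero ((N : ℕ) : AC) := by
    constructor
    set pc := ringChar F with hpc
    haveI : CharP F pc := ringChar.charP F
    obtain ⟨k, hpp, hcard⟩ := FiniteField.card F pc
    haveI : CharP AC pc := charP_of_injective_algebraMap (algebraMap F AC).injective pc
    intro h0
    have hdvd : pc ∣ N := (CharP.cast_eq_zero_iff AC pc N).mp h0
    have hdvdq : pc ∣ q ^ m := by
      rw [hqdef, hcard]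
      exact dvd_pow (dvd_pow_self pc k.ne_zero) hm.ne'
    have : pc ∣ 1 := (Nat.dvd_add_right hdvdq).mp hdvd
    exact hpp.one_lt.ne' (Nat.dvd_one.mp this)
  obtain ⟨ζ, hζ⟩ := HasEnoughRootsOfUnity.exists_primitiveRoot AC N
  set S : Finset AC := nthRootsFinset N (1 : AC) with hSdef
  have hScard : S.card = N := hζ.card_nthRootsFinset
  have hmemS : ∀ x : AC, x ∈ S ↔ x ^ N = 1 := fun x => mem_nthRootsFinset hN0 (1 : AC)
  -- basic facts about elements of S
  have hne11 : (-1 : AC) ≠ 1 := neg_one_ne_one_AC hodd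
  have h1S : (1 : AC) ∈ S := (hmemS 1).mpr (one_pow N)
  have hm1S : (-1 : AC) ∈ S := (hmemS (-1)).mpr (hNeven.neg_one_pow)
  -- the image of S under minpoly
  set T : Finset F[X] := S.image (fun x => minpoly F x) with hTdef
  have hcount := Finset.card_eq_sum_card_image (fun x => minpoly F x) S
  -- each element of T of degree ≠ 1 comes from a non-trivial root
  have hTdesc : ∀ p ∈ T, ∃ x ∈ S, minpoly F x = p := by
    intro p hp
    obtain ⟨x, hx, hxp⟩ := Finset.mem_image.mp hp
    exact ⟨x, hx, hxp⟩
  have hdeg1 : ∀ x ∈ S, x ≠ 1 → x ≠ -1 → (minpoly F x).natDegree ≠ 1 := by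
    intro x hx hx1 hxm1 hdeg
    obtain ⟨a, ha⟩ := minpoly.natDegree_eq_one_iff.mp hdeg
    have hxN : x ^ N = 1 := (hmemS x).mp hx
    have haN : (algebraMap F AC) (a * a) = (algebraMap F AC) 1 := by
      rw [map_one, map_mul, ha]
      rw [← hxN, hNdef, pow_succ]
      congr 1
      rw [← ha, ← map_pow, FiniteField.pow_card_pow, ha]
    have haa : a * a = 1 := (algebraMap F AC).injective haN
    rcases mul_self_eq_one_iff.mp haa with h | h
    · exact hx1 (by rw [← ha, h, map_one])
    · exact hxm1 (by rw [← ha, h, map_neg, map_one])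
  -- fibers over degree-one polynomials
  have hfib1 : (S.filter (fun x => minpoly F x = X - C 1)).card = 1 := by
    rw [Finset.card_eq_one]
    refine ⟨1, ?_⟩
    ext x
    simp only [Finset.mem_filter, Finset.mem_singleton]
    constructor
    · rintro ⟨-, hx⟩
      have := minpoly.aeval F x
      rw [hx] at this
      simp only [map_sub, map_one, aeval_X, aeval_C] at this
      have : x - 1 = 0 := by simpa using this
      linear_combination this
    · rintro rfl
      refine ⟨h1S, ?_⟩
      rw [show (1 : AC) = algebraMap F AC 1 from (map_one _).symm, minpoly.eq_X_sub_C]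
  have hfibm1 : (S.filter (fun x => minpoly F x = X + C 1)).card = 1 := by
    rw [Finset.card_eq_one]
    refine ⟨-1, ?_⟩
    ext x
    simp only [Finset.mem_filter, Finset.mem_singleton]
    constructor
    · rintro ⟨-, hx⟩
      have := minpoly.aeval F x
      rw [hx] at this
      simp only [map_add, map_one, aeval_X, aeval_C] at this
      have : x + 1 = 0 := by simpa using this
      linear_combination this
    · rintro rfl
      refine ⟨hm1S, ?_⟩
      rw [show (-1 : AC) = algebraMap F AC (-1) by rw [map_neg, map_one],
        minpoly.eq_X_sub_C]
      rw [map_neg, map_one, sub_neg_eq_add]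
  have hXne : (X - C 1 : F[X]) ≠ X + C 1 := by
    intro h
    have := congrArg (fun r => Polynomial.coeff r 0) h
    simp only [Polynomial.coeff_sub, Polynomial.coeff_add, Polynomial.coeff_X_zero,
      Polynomial.coeff_C_zero, zero_sub, zero_add] at this
    have h2 : (2 : F) = 0 := by linear_combination -this
    exact two_ne_zero_of_odd_card hodd h2
  -- degree-one part of T
  have hT1 : T.filter (fun p => p.natDegree = 1) = {X - C 1, X + C 1} := by
    ext p
    simp only [Finset.mem_filter, Finset.mem_insert, Finset.mem_singleton]
    constructor
    · rintro ⟨hp, hdeg⟩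
      obtain ⟨x, hx, rfl⟩ := hTdesc p hp
      obtain ⟨a, ha⟩ := minpoly.natDegree_eq_one_iff.mp hdeg
      have hxN : x ^ N = 1 := (hmemS x).mp hx
      have haN : (algebraMap F AC) (a * a) = (algebraMap F AC) 1 := by
        rw [map_one, map_mul, ha, ← hxN, hNdef, pow_succ]
        congr 1
        rw [← ha, ← map_pow, FiniteField.pow_card_pow, ha]
      have haa : a * a = 1 := (algebraMap F AC).injective haN
      rcases mul_self_eq_one_iff.mp haa with h | h
      · left
        rw [← ha, h, map_one,
          show (1 : AC) = algebraMap F AC 1 from (map_one _).symm, minpoly.eq_X_sub_C]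
      · right
        rw [← ha, h, map_neg, map_one,
          show (-1 : AC) = algebraMap F AC (-1) by rw [map_neg, map_one],
          minpoly.eq_X_sub_C, map_neg, map_one, sub_neg_eq_add]
    · rintro (rfl | rfl)
      · constructor
        · apply Finset.mem_image.mpr
          refine ⟨1, h1S, ?_⟩
          rw [show (1 : AC) = algebraMap F AC 1 from (map_one _).symm, minpoly.eq_X_sub_C]
        · exact natDegree_X_sub_C 1
      · constructor
        · apply Finset.mem_image.mpr
          refine ⟨-1, hm1S, ?_⟩
          rw [show (-1 : AC) = algebraMap F AC (-1) by rw [map_neg, map_one],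
            minpoly.eq_X_sub_C, map_neg, map_one, sub_neg_eq_add]
        · have : (X + C 1 : F[X]) = X - C (-1) := by rw [map_neg, sub_neg_eq_add]
          rw [this]
          exact natDegree_X_sub_C (-1)
  -- the divisor set
  set D := m.divisors.filter (fun d => Odd (m / d)) with hDdef
  have hDpos : ∀ d ∈ D, 0 < d ∧ d ∣ m ∧ Odd (m / d) := by
    intro d hD
    rw [hDdef, Finset.mem_filter, Nat.mem_divisors] at hD
    obtain ⟨⟨hdm, -⟩, hoddq⟩ := hD
    refine ⟨?_, hdm, hoddq⟩
    rcases Nat.eq_zero_or_pos d with rfl | h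
    · rw [zero_dvd_iff] at hdm; omega
    · exact h
  have hne1AC : ∀ x : AC, x ≠ 1 → x ≠ -1 → (minpoly F x).natDegree ≠ 1 → True := fun _ _ _ _ => trivial
  -- membership characterization for degree-2d elements of T
  have hTmem : ∀ d ∈ D, ∀ p : F[X],
      (p ∈ T ∧ p.natDegree = 2 * d) ↔
      (Irreducible p ∧ p.Monic ∧ p.natDegree = 2 * d ∧ p.reverse = p) := by
    intro d hD p
    obtain ⟨hd0, hdm, hoddq⟩ := hDpos d hD
    constructor
    · rintro ⟨hpT, hdeg⟩
      obtain ⟨x, hx, rfl⟩ := hTdesc p hpT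
      have hint : IsIntegral F x := Algebra.IsIntegral.isIntegral x
      have hx1 : x ≠ 1 := by
        rintro rfl
        rw [show (1 : AC) = algebraMap F AC 1 from (map_one _).symm, minpoly.eq_X_sub_C,
          natDegree_X_sub_C] at hdeg
        omega
      have hxm1 : x ≠ -1 := by
        rintro rfl
        rw [show (-1 : AC) = algebraMap F AC (-1) by rw [map_neg, map_one],
          minpoly.eq_X_sub_C, natDegree_X_sub_C] at hdeg
        omega
      obtain ⟨d', hd'0, hd'm, hodd', hdeg', hrev⟩ :=
        minpoly_selfrec hodd hm ((hmemS x).mp hx) hx1 hxm1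
      exact ⟨minpoly.irreducible hint, minpoly.monic hint, hdeg, hrev⟩
    · rintro ⟨hirr, hmon, hdeg, hrev⟩
      have hdegne : p.degree ≠ 0 := by
        intro h0
        have := Polynomial.natDegree_eq_of_degree_eq_some (n := 0) (by exact_mod_cast h0)
        omega
      obtain ⟨β, hβ⟩ := IsAlgClosed.exists_aeval_eq_zero AC p hdegne
      have hβS : β ∈ S :=
        (hmemS β).mpr (root_pow_qn hodd hd0 hdm hoddq hirr hmon hdeg hrev hβ)
      exact ⟨Finset.mem_image.mpr
        ⟨β, hβS, (minpoly.eq_of_irreducible_of_monic hirr hβ hmon).symm⟩, hdeg⟩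
  -- fibers over degree-2d polynomials
  have hfib2 : ∀ d ∈ D, ∀ p ∈ T, p.natDegree = 2 * d →
      (S.filter (fun x => minpoly F x = p)).card = 2 * d := by
    intro d hD p hpT hdeg
    obtain ⟨hd0, hdm, hoddq⟩ := hDpos d hD
    obtain ⟨hirr, hmon, -, hrev⟩ := (hTmem d hD p).mp ⟨hpT, hdeg⟩
    have hsep : p.Separable := PerfectField.separable_of_irreducible hirr
    have hsplits : (p.map (algebraMap F AC)).Splits := IsAlgClosed.splits _
    have hfeq : S.filter (fun x => minpoly F x = p) = (p.aroots AC).toFinset := by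
      ext x
      simp only [Finset.mem_filter, Multiset.mem_toFinset]
      constructor
      · rintro ⟨hxS, rfl⟩
        exact (Polynomial.mem_aroots).mpr
          ⟨minpoly.ne_zero (Algebra.IsIntegral.isIntegral x), minpoly.aeval F x⟩
      · intro hx
        have hβ : (aeval x) p = 0 := (Polynomial.mem_aroots.mp hx).2
        refine ⟨(hmemS x).mpr (root_pow_qn hodd hd0 hdm hoddq hirr hmon hdeg hrev hβ),
          (minpoly.eq_of_irreducible_of_monic hirr hβ hmon).symm⟩
    rw [hfeq]
    have hnodup : (p.aroots AC).Nodup := nodup_roots (hsep.map (f := algebraMap F AC))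
    rw [Multiset.toFinset_card_of_nodup hnodup, ← hdeg]
    exact (hsplits.natDegree_eq_card_roots.symm.trans (natDegree_map _))
  -- assembling everything
  have hsplit := Finset.sum_filter_add_sum_filter_not T (fun p => p.natDegree = 1)
      (fun p => (S.filter (fun x => minpoly F x = p)).card)
  have hsum1 : ∑ p ∈ T.filter (fun p => p.natDegree = 1),
      (S.filter (fun x => minpoly F x = p)).card = 2 := by
    rw [hT1, Finset.sum_pair hXne, hfib1, hfibm1]
  have hmaps : ∀ p ∈ T.filter (fun p => ¬ p.natDegree = 1), p.natDegree / 2 ∈ D := by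
    intro p hp
    rw [Finset.mem_filter] at hp
    obtain ⟨hpT, hdne⟩ := hp
    obtain ⟨x, hx, rfl⟩ := hTdesc p hpT
    have hx1 : x ≠ 1 := by
      rintro rfl
      exact hdne (by rw [show (1 : AC) = algebraMap F AC 1 from (map_one _).symm,
        minpoly.eq_X_sub_C, natDegree_X_sub_C])
    have hxm1 : x ≠ -1 := by
      rintro rfl
      exact hdne (by rw [show (-1 : AC) = algebraMap F AC (-1) by rw [map_neg, map_one],
        minpoly.eq_X_sub_C, natDegree_X_sub_C])
    obtain ⟨d', hd'0, hd'm, hodd', hdeg', hrev⟩ :=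
      minpoly_selfrec hodd hm ((hmemS x).mp hx) hx1 hxm1
    rw [hdeg', hDdef, Finset.mem_filter, Nat.mem_divisors]
    have h2 : 2 * d' / 2 = d' := by omega
    rw [h2]
    exact ⟨⟨hd'm, hm.ne'⟩, hodd'⟩
  have hsum2 := Finset.sum_fiberwise_of_maps_to hmaps
      (fun p => (S.filter (fun x => minpoly F x = p)).card)
  have hfilter_eq : ∀ d ∈ D, (T.filter (fun p => ¬ p.natDegree = 1)).filter
      (fun p => p.natDegree / 2 = d) = T.filter (fun p => p.natDegree = 2 * d) := by
    intro d hD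
    obtain ⟨hd0, -, -⟩ := hDpos d hD
    ext p
    constructor
    · intro hp
      have hp1 := Finset.mem_filter.mp hp
      have hp2 := Finset.mem_filter.mp hp1.1
      obtain ⟨hpT, hdne⟩ := hp2
      have hd2 := hp1.2
      refine Finset.mem_filter.mpr ⟨hpT, ?_⟩
      obtain ⟨x, hx, rfl⟩ := hTdesc p hpT
      have hx1 : x ≠ 1 := by
        rintro rfl
        exact hdne (by rw [show (1 : AC) = algebraMap F AC 1 from (map_one _).symm,
          minpoly.eq_X_sub_C, natDegree_X_sub_C])
      have hxm1 : x ≠ -1 := by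
        rintro rfl
        exact hdne (by rw [show (-1 : AC) = algebraMap F AC (-1) by rw [map_neg, map_one],
          minpoly.eq_X_sub_C, natDegree_X_sub_C])
      obtain ⟨d', hd'0, -, -, hdeg', -⟩ :=
        minpoly_selfrec hodd hm ((hmemS x).mp hx) hx1 hxm1
      rw [hdeg'] at hd2 ⊢
      omega
    · intro hp
      obtain ⟨hpT, hdeg⟩ := Finset.mem_filter.mp hp
      exact Finset.mem_filter.mpr ⟨Finset.mem_filter.mpr ⟨hpT, by omega⟩, by omega⟩
  have hcard_eq : ∀ d ∈ D, (T.filter (fun p => p.natDegree = 2 * d)).card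
      = ({p : F[X] | Irreducible p ∧ p.Monic ∧ p.natDegree = 2 * d ∧
          p.reverse = p}.ncard) := by
    intro d hD
    have hseteq : ({p : F[X] | Irreducible p ∧ p.Monic ∧ p.natDegree = 2 * d ∧
        p.reverse = p} : Set F[X]) = ↑(T.filter (fun p => p.natDegree = 2 * d)) := by
      ext p
      simp only [Set.mem_setOf_eq, Finset.coe_filter, Set.mem_setOf_eq]
      rw [← hTmem d hD p]
    rw [hseteq, Set.ncard_coe_finset]
  have hfinal : S.card = 2 + ∑ d ∈ D, 2 * d *
      ({p : F[X] | Irreducible p ∧ p.Monic ∧ p.natDegree = 2 * d ∧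
        p.reverse = p}.ncard) := by
    rw [hcount, ← hsplit, hsum1]
    congr 1
    rw [← hsum2]
    apply Finset.sum_congr rfl
    intro d hD
    rw [hfilter_eq d hD]
    rw [Finset.sum_congr rfl (fun p hp => hfib2 d hD p (Finset.mem_filter.mp hp).1
        (Finset.mem_filter.mp hp).2)]
    rw [Finset.sum_const, smul_eq_mul, hcard_eq d hD, mul_comm]
  rw [← hScard, hfinal]

noncomputable def A (F : Type*) [Field F] [Fintype F] (k : ℕ) : ℕ :=
  Set.ncard {p : F[X] | Irreducible p ∧ p.Monic ∧ p.natDegree = 2 * k ∧ p.reverse = p}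

lemma odd_of_dvd_odd {x v : ℕ} (hxv : x ∣ v) (hv : Odd v) : Odd x := by
  rw [Nat.odd_iff] at hv ⊢
  by_contra h
  have h2 : 2 ∣ x := by omega
  have := h2.trans hxv
  omega

lemma key_count_int (hodd : Odd (Fintype.card F)) (a : ℕ) {v : ℕ} (hv : 0 < v)
    (hvodd : Odd v) :
    ∑ e ∈ v.divisors, ((2 * (2 ^ a * e) * A F (2 ^ a * e) : ℕ) : ℤ)
      = (Fintype.card F : ℤ) ^ (2 ^ a * v) - 1 := by
  set q := Fintype.card F with hq
  set m := 2 ^ a * v with hmdef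
  have h2a : 0 < 2 ^ a := pow_pos two_pos a
  have hm : 0 < m := by positivity
  have hkey := key_count hodd hm
  set D := m.divisors.filter (fun d => Odd (m / d)) with hD
  have hbij : ∑ e ∈ v.divisors, ((2 * (2 ^ a * e) * A F (2 ^ a * e) : ℕ) : ℤ)
      = ∑ d ∈ D, ((2 * d * A F d : ℕ) : ℤ) := by
    apply Finset.sum_nbij' (fun e => 2 ^ a * e) (fun d => d / 2 ^ a)
    · intro e he
      rw [Nat.mem_divisors] at he
      obtain ⟨hev, -⟩ := he
      rw [hD, Finset.mem_filter, Nat.mem_divisors]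
      refine ⟨⟨mul_dvd_mul_left _ hev, hm.ne'⟩, ?_⟩
      rw [hmdef, Nat.mul_div_mul_left _ _ h2a]
      exact odd_of_dvd_odd (Nat.div_dvd_of_dvd hev) hvodd
    · intro d hd
      rw [hD, Finset.mem_filter, Nat.mem_divisors] at hd
      obtain ⟨⟨hdm, -⟩, hoddq⟩ := hd
      have hcop : Nat.Coprime (2 ^ a) (m / d) :=
        Nat.Coprime.pow_left a
          (((Nat.Prime.coprime_iff_not_dvd Nat.prime_two).mpr
            (by rw [Nat.odd_iff] at hoddq; omega)))
      have h2ad : 2 ^ a ∣ d := by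
        have hmd : d * (m / d) = m := Nat.mul_div_cancel' hdm
        have : 2 ^ a ∣ d * (m / d) := by rw [hmd, hmdef]; exact Dvd.intro v rfl
        exact hcop.dvd_of_dvd_mul_right this
      rw [Nat.mem_divisors]
      obtain ⟨e, rfl⟩ := h2ad
      rw [Nat.mul_div_cancel_left _ h2a]
      exact ⟨(mul_dvd_mul_iff_left h2a.ne').mp hdm, hv.ne'⟩
    · intro e he
      rw [Nat.mul_div_cancel_left _ h2a]
    · intro d hd
      rw [hD, Finset.mem_filter, Nat.mem_divisors] at hd
      obtain ⟨⟨hdm, -⟩, hoddq⟩ := hd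
      have hcop : Nat.Coprime (2 ^ a) (m / d) :=
        Nat.Coprime.pow_left a
          (((Nat.Prime.coprime_iff_not_dvd Nat.prime_two).mpr
            (by rw [Nat.odd_iff] at hoddq; omega)))
      have h2ad : 2 ^ a ∣ d := by
        have hmd : d * (m / d) = m := Nat.mul_div_cancel' hdm
        have : 2 ^ a ∣ d * (m / d) := by rw [hmd, hmdef]; exact Dvd.intro v rfl
        exact hcop.dvd_of_dvd_mul_right this
      exact Nat.mul_div_cancel' h2ad
    · intro e he
      rfl
  rw [hbij]
  have hcast : ((∑ d ∈ D, 2 * d * A F d : ℕ) : ℤ)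
      = ∑ d ∈ D, ((2 * d * A F d : ℕ) : ℤ) := by push_cast; rfl
  have hkey' : (q : ℤ) ^ m + 1 = 2 + ∑ d ∈ D, ((2 * d * A F d : ℕ) : ℤ) := by
    rw [← hcast]
    exact_mod_cast congrArg (fun x : ℕ => (x : ℤ)) hkey
  linarith [hkey']

end SRAux

open SRAux in
/-- For odd prime power `q`, the number of self-reciprocal irreducible monic
polynomials of degree `2n` over `F_q` equals
`(1/(2n)) ∑_{d ∣ n, d odd} μ(d) (q^{n/d} - 1)`. -/
theorem card_selfReciprocal_irreducible_monic {F : Type*} [Field F] [Fintype F]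
    (hq : Odd (Fintype.card F)) (n : ℕ) (hn : 1 ≤ n) :
    ((2 * n : ℕ) : ℤ) * ({p : F[X] | Irreducible p ∧ p.Monic ∧ p.natDegree = 2 * n ∧
        p.reverse = p}.ncard : ℤ)
      = ∑ d ∈ n.divisors.filter (fun d => Odd d),
          (ArithmeticFunction.moebius d : ℤ) * ((Fintype.card F : ℤ) ^ (n / d) - 1) := by
  classical
  set a := n.factorization 2 with ha
  set u := n / 2 ^ a with hu
  have hn0 : n ≠ 0 := by omega
  have hun : 2 ^ a * u = n := Nat.ordProj_mul_ordCompl_eq_self n 2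
  have hu0 : 0 < u := Nat.ordCompl_pos 2 hn0
  have huodd : Odd u := by
    have h2 : ¬ 2 ∣ u := by rw [hu, ha]; exact Nat.not_dvd_ordCompl Nat.prime_two hn0
    rw [Nat.odd_iff]
    omega
  have hclosed : ∀ x y : ℕ, x ∣ y → y ∈ {v : ℕ | Odd v} → x ∈ {v : ℕ | Odd v} :=
    fun x y hxy hy => odd_of_dvd_odd hxy hy
  set f : ℕ → ℤ := fun e => ((2 * (2 ^ a * e) * A F (2 ^ a * e) : ℕ) : ℤ) with hf
  set g : ℕ → ℤ := fun v => (Fintype.card F : ℤ) ^ (2 ^ a * v) - 1 with hg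
  have hyp : ∀ v > 0, v ∈ {v : ℕ | Odd v} → ∑ e ∈ v.divisors, f e = g v :=
    fun v hv hvo => key_count_int hq a hv hvo
  have hinv := (ArithmeticFunction.sum_eq_iff_sum_smul_moebius_eq_on
      {v : ℕ | Odd v} hclosed).mp hyp u hu0 huodd
  rw [Nat.sum_divisorsAntidiagonal (fun x y => (ArithmeticFunction.moebius x : ℤ) • g y)]
    at hinv
  -- identify the index sets
  have hset : n.divisors.filter (fun d => Odd d) = u.divisors := by
    ext d
    simp only [Finset.mem_filter, Nat.mem_divisors]
    constructor
    · rintro ⟨⟨hdn, -⟩, hdo⟩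
      refine ⟨?_, hu0.ne'⟩
      have hcop : Nat.Coprime d (2 ^ a) :=
        Nat.Coprime.pow_right a
          (((Nat.Prime.coprime_iff_not_dvd Nat.prime_two).mpr
            (by rw [Nat.odd_iff] at hdo; omega)).symm)
      exact hcop.dvd_of_dvd_mul_left (by rwa [← hun] at hdn)
    · rintro ⟨hdu, -⟩
      refine ⟨⟨hdu.trans ?_, hn0⟩, odd_of_dvd_odd hdu huodd⟩
      exact ⟨2 ^ a, by rw [← hun]; ring⟩
  rw [hset]
  have hsummand : ∀ d ∈ u.divisors,
      (ArithmeticFunction.moebius d : ℤ) * ((Fintype.card F : ℤ) ^ (n / d) - 1)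
        = ArithmeticFunction.moebius d • g (u / d) := by
    intro d hd
    obtain ⟨hdu, -⟩ := Nat.mem_divisors.mp hd
    rw [smul_eq_mul, hg]
    simp only []
    congr 2
    rw [← hun, Nat.mul_div_assoc _ hdu]
  rw [Finset.sum_congr rfl hsummand, hinv, hf]
  simp only []
  rw [hun]
  have hAn : A F n = ({p : F[X] | Irreducible p ∧ p.Monic ∧ p.natDegree = 2 * n ∧
      p.reverse = p}.ncard) := rfl
  rw [hAn]
  push_cast
  ring
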